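/- Let r ≥ 3 and s = r − 1 (so s + 1 = r). Then b_r is a non-Hausdorff element for the action of H̃_r on {0,1}^ℕ: b_r fixes the point 1^∞ = (1,1,1,…), b_r does not restrict to the identity on any open neighborhood of 1^∞, and every open neighborhood of 1^∞ contains a nonempty open subset on which b_r restricts to the identity. -/

import Mathlib

/-- Prepend the letter `v` to the sequence `x`. -/
def cons (v : Fin 2) (x : ℕ → Fin 2) : ℕ → Fin 2
  | 0 => v
  | n + 1 => x n

/-- Pink's recursive equations for the generators `b₁, …, b_r` of the group `H̃_r`
(strictly pre-periodic case with pre-period `s`): `b₁(v·w) = (1-v)·w`,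
`b_{s+1}(0·w) = 0·b_s(w)`, `b_{s+1}(1·w) = 1·b_r(w)`, and for `2 ≤ i ≤ r` with
`i ≠ s+1`, `b_i(0·w) = 0·b_{i-1}(w)`, `b_i(1·w) = 1·w`. -/
def PinkPreRec (r s : ℕ) (b : ℕ → (ℕ → Fin 2) → (ℕ → Fin 2)) : Prop :=
  (∀ w, b 1 (cons 0 w) = cons 1 w) ∧
  (∀ w, b 1 (cons 1 w) = cons 0 w) ∧
  (∀ w, b (s + 1) (cons 0 w) = cons 0 (b s w)) ∧
  (∀ w, b (s + 1) (cons 1 w) = cons 1 (b r w)) ∧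
  ∀ i, 2 ≤ i → i ≤ r → i ≠ s + 1 →
    (∀ w, b i (cons 0 w) = cons 0 (b (i - 1) w)) ∧ (∀ w, b i (cons 1 w) = cons 1 w)

/-- Prepend `k` ones. -/
def ones : ℕ → (ℕ → Fin 2) → (ℕ → Fin 2)
  | 0, w => w
  | k + 1, w => cons 1 (ones k w)

/-- Prepend `k` zeros. -/
def zeros : ℕ → (ℕ → Fin 2) → (ℕ → Fin 2)
  | 0, w => w
  | k + 1, w => cons 0 (zeros k w)

lemma cons_zero (v : Fin 2) (w : ℕ → Fin 2) : cons v w 0 = v := rfl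

lemma cons_succ (v : Fin 2) (w : ℕ → Fin 2) (n : ℕ) : cons v w (n + 1) = w n := rfl

lemma ones_apply_lt {k i : ℕ} (h : i < k) (w : ℕ → Fin 2) : ones k w i = 1 := by
  induction k generalizing i with
  | zero => omega
  | succ k ih =>
    cases i with
    | zero => rfl
    | succ i => rw [ones, cons_succ]; exact ih (by omega)

lemma ones_apply_add (k j : ℕ) (w : ℕ → Fin 2) : ones k w (k + j) = w j := by
  induction k with
  | zero => simp [ones]
  | succ k ih =>
    have : k + 1 + j = (k + j) + 1 := by omega
    rw [ones, this, cons_succ, ih]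

lemma zeros_apply_add (k j : ℕ) (w : ℕ → Fin 2) : zeros k w (k + j) = w j := by
  induction k with
  | zero => simp [zeros]
  | succ k ih =>
    have : k + 1 + j = (k + j) + 1 := by omega
    rw [zeros, this, cons_succ, ih]

lemma cons_tail (x : ℕ → Fin 2) : cons (x 0) (fun n => x (n + 1)) = x := by
  funext n; cases n <;> rfl

lemma zeros_const (k : ℕ) : zeros k (fun _ => 0) = (fun _ => (0 : Fin 2)) := by
  induction k with
  | zero => rfl
  | succ k ih =>
    rw [zeros, ih]
    funext n; cases n <;> rfl

/-- For `r ≥ 3` and `s = r - 1`, the map `b_r` is a non-Hausdorff element for the action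
of `H̃_r` on `{0,1}^ℕ`: it fixes the constant sequence `1^∞`, it is not the identity on
any open neighborhood of `1^∞`, and every open neighborhood of `1^∞` contains a nonempty
open subset on which `b_r` is the identity. -/
theorem stmt10 (r : ℕ) (hr : 3 ≤ r)
    (b : ℕ → (ℕ → Fin 2) → (ℕ → Fin 2)) (hb : PinkPreRec r (r - 1) b) :
    b r (fun _ => 1) = (fun _ => 1) ∧
    (∀ W : Set (ℕ → Fin 2), IsOpen W → (fun _ => (1 : Fin 2)) ∈ W →
      ¬ Set.EqOn (b r) id W) ∧
    (∀ W : Set (ℕ → Fin 2), IsOpen W → (fun _ => (1 : Fin 2)) ∈ W →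
      ∃ O : Set (ℕ → Fin 2), IsOpen O ∧ O.Nonempty ∧ O ⊆ W ∧ Set.EqOn (b r) id O) := by
  obtain ⟨hb1, hb2, hb3, hb4, hb5⟩ := hb
  have hs1 : r - 1 + 1 = r := by omega
  rw [hs1] at hb3 hb4
  -- b r on sequences starting with 1
  have hbr1 : ∀ w, b r (cons 1 w) = cons 1 (b r w) := hb4
  have hbr0 : ∀ w, b r (cons 0 w) = cons 0 (b (r - 1) w) := hb3
  -- b (r-1) is identity on sequences starting with 1
  have hbrm1 : ∀ w, b (r - 1) (cons 1 w) = cons 1 w := by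
    intro w
    exact (hb5 (r - 1) (by omega) (by omega) (by omega)).2 w
  -- b r commutes with ones
  have hbr_ones : ∀ k w, b r (ones k w) = ones k (b r w) := by
    intro k
    induction k with
    | zero => intro w; rfl
    | succ k ih => intro w; rw [ones, hbr1, ih]; rfl
  -- Lemma A : descending through zeros
  have hA : ∀ k, k + 1 ≤ r - 1 → ∀ w, b (k + 1) (zeros k (cons 0 w)) = zeros k (cons 1 w) := by
    intro k
    induction k with
    | zero => intro _ w; exact hb1 w
    | succ k ih =>
      intro hk w
      have h5 := hb5 (k + 2) (by omega) (by omega) (by omega)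
      have : k + 2 - 1 = k + 1 := by omega
      rw [zeros, h5.1, this, ih (by omega), zeros]
  -- Part 1 : b r fixes 1^∞
  have hfix : b r (fun _ => 1) = (fun _ => 1) := by
    have h : b r (fun _ => 1) = cons 1 (b r (fun _ => 1)) := by
      conv_lhs => rw [show (fun _ => (1 : Fin 2)) = cons 1 (fun _ => 1) by
        funext n; cases n <;> rfl]
      rw [hbr1]
    funext n
    induction n with
    | zero => rw [h]; rfl
    | succ n ihn => rw [h, cons_succ, ihn]
  refine ⟨hfix, ?_, ?_⟩
  · -- Part 2
    intro W hW hmem hEq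
    obtain ⟨I, u, hu, hsub⟩ := isOpen_pi_iff.mp hW _ hmem
    set N := I.sup id + 1 with hN
    have hIN : ∀ i ∈ I, i < N := by
      intro i hi
      have := Finset.le_sup (f := id) hi
      simp only [id] at this
      omega
    set x := ones N (fun _ => 0) with hx
    have hxW : x ∈ W := by
      apply hsub
      intro i hi
      have : x i = 1 := ones_apply_lt (hIN i hi) _
      rw [this]
      exact (hu i hi).2
    have hxe : b r x = x := hEq hxW
    -- compute b r x at index N + (1 + (r - 2))
    have hz : (fun _ => (0 : Fin 2)) = cons 0 (fun _ => 0) := by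
      funext n; cases n <;> rfl
    have hz2 : (fun _ => (0 : Fin 2)) = zeros (r - 2) (cons 0 (fun _ => 0)) := by
      rw [← hz, zeros_const]
    have hbz : b (r - 1) (fun _ => 0) = zeros (r - 2) (cons 1 (fun _ => 0)) := by
      have := hA (r - 2) (by omega) (fun _ => 0)
      have h21 : r - 2 + 1 = r - 1 := by omega
      rw [h21] at this
      conv_lhs => rw [hz2]
      exact this
    have hbrx : b r x = ones N (cons 0 (zeros (r - 2) (cons 1 (fun _ => 0)))) := by
      rw [hx, hbr_ones]
      rw [hz, hbr0, ← hz, hbz]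
    have hval1 : b r x (N + (1 + (r - 2))) = 1 := by
      rw [hbrx, ones_apply_add]
      have : (1 + (r - 2)) = (r - 2) + 1 := by omega
      rw [this, cons_succ]
      have := zeros_apply_add (r - 2) 0 (cons 1 (fun _ => 0))
      simpa [cons_zero] using this
    have hval0 : x (N + (1 + (r - 2))) = 0 := by
      rw [hx, ones_apply_add]
    rw [hxe] at hval1
    rw [hval0] at hval1
    exact absurd hval1 (by decide)
  · -- Part 3
    intro W hW hmem
    obtain ⟨I, u, hu, hsub⟩ := isOpen_pi_iff.mp hW _ hmem
    set N := I.sup id + 1 with hN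
    have hIN : ∀ i ∈ I, i < N := by
      intro i hi
      have := Finset.le_sup (f := id) hi
      simp only [id] at this
      omega
    set c : ℕ → Fin 2 := ones N (cons 0 (cons 1 (fun _ => 1))) with hc
    refine ⟨⋂ i ∈ Finset.range (N + 2), {x : ℕ → Fin 2 | x i = c i}, ?_, ?_, ?_, ?_⟩
    · refine isOpen_biInter_finset fun i _ => ?_
      show IsOpen ((fun x : ℕ → Fin 2 => x i) ⁻¹' {c i})
      exact (isOpen_discrete _).preimage (continuous_apply i)
    · exact ⟨c, by simp⟩
    · intro x hx
      simp only [Set.mem_iInter, Finset.mem_range, Set.mem_setOf_eq] at hx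
      apply hsub
      intro i hi
      have h1 : x i = c i := hx i (by have := hIN i hi; omega)
      have h2 : c i = 1 := ones_apply_lt (hIN i hi) _
      rw [h1, h2]
      exact (hu i hi).2
    · intro x hx
      simp only [Set.mem_iInter, Finset.mem_range, Set.mem_setOf_eq] at hx
      have hx1 : ∀ i < N, x i = 1 := by
        intro i hi
        rw [hx i (by omega), hc]
        exact ones_apply_lt hi _
      have hxN : x N = 0 := by
        rw [hx N (by omega), hc]
        have := ones_apply_add N 0 (cons 0 (cons 1 (fun _ => 1)))
        simpa [cons_zero] using this
      have hxN1 : x (N + 1) = 1 := by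
        rw [hx (N + 1) (by omega), hc, ones_apply_add]
        rfl
      -- x = ones N (cons 0 (cons 1 tail))
      have hxeq : x = ones N (cons 0 (cons 1 (fun n => x (N + 2 + n)))) := by
        funext i
        rcases lt_or_ge i N with hi | hi
        · rw [ones_apply_lt hi, hx1 i hi]
        · obtain ⟨j, rfl⟩ := Nat.exists_eq_add_of_le hi
          rw [ones_apply_add]
          match j with
          | 0 => simpa [cons_zero] using hxN
          | 1 => rw [cons_succ, cons_zero]; exact hxN1
          | (m + 2) =>
            rw [cons_succ, cons_succ]
            congr 1
            omega
      show b r x = x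
      rw [hxeq, hbr_ones, hbr0, hbrm1]
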